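/- Let G be a countably infinite group, H a compact metrizable topological group, and τ : G → H an injective group homomorphism with dense image. Let (Γ_n) be a decreasing sequence of finite-index normal subgroups of G such that for every neighborhood U of 1_H there exists n with τ(Γ_n) ⊆ U. If W ⊆ H satisfies ∂W ∩ τ(G) = ∅, then the symbolic model set x_W is a Toeplitz array relative to (Γ_n): for every g ∈ G there exist n ∈ ℕ and α ∈ {0,1} such that x_W(gγ) = α for all γ ∈ Γ_n. -/

import Mathlib

open MeasureTheory Filter Set Topology
open scoped symmDiff ENNReal

/-- Extended logarithm of an `ℝ≥0∞` value, with `eLog 0 = ⊥` and `eLog ⊤ = ⊤`. -/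
noncomputable def eLog (x : ℝ≥0∞) : EReal :=
  if x = 0 then ⊥ else if x = ⊤ then ⊤ else ((Real.log x.toReal : ℝ) : EReal)

/-- Maximal cardinality (in `ℝ≥0∞`) of an `ε`-separated subset of `S` w.r.t. `d`. -/
noncomputable def sepCount {Z : Type*} (S : Set Z) (d : Z → Z → ℝ) (ε : ℝ) : ℝ≥0∞ :=
  ⨆ (A : Finset Z) (_ : ↑A ⊆ S ∧ (A : Set Z).Pairwise fun z z' => ε ≤ d z z'), (A.card : ℝ≥0∞)

/-- The quantity `log Sep(S, d, ε) / (- log ε)`, as an extended real. -/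
noncomputable def acRatio {Z : Type*} (S : Set Z) (d : Z → Z → ℝ) (ε : ℝ) : EReal :=
  eLog (sepCount S d ε) * (((-Real.log ε)⁻¹ : ℝ) : EReal)

open Classical in
/-- `F` is a left Følner sequence in the group `G`. -/
def IsFolner {G : Type*} [Group G] (F : ℕ → Finset G) : Prop :=
  (∀ n, (F n).Nonempty) ∧ ∀ g : G,
    Filter.Tendsto
      (fun n => ((((F n).image fun h => g * h) ∆ F n).card : ℝ) / ((F n).card : ℝ))
      Filter.atTop (nhds 0)

/-- The Besicovitch pseudometric w.r.t. the sequence `F`. -/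
noncomputable def besicovitchDist {G : Type*} (F : ℕ → Finset G) (x y : G → Bool) : ℝ :=
  Filter.limsup (fun n => (((F n).filter fun g => x g ≠ y g).card : ℝ) / ((F n).card : ℝ))
    Filter.atTop

open Classical in
/-- The symbolic model set (as a 0-1 array) associated to a window `W ⊆ H`. -/
noncomputable def modelSet {G H : Type*} (τ : G → H) (W : Set H) : G → Bool :=
  fun g => decide (τ g ∈ W)

/-- Orbit closure of `x` under the left shift `(g·x)(h) = x(hg)`, in the product topology. -/
def shiftOrbitClosure {G : Type*} [Group G] (x : G → Bool) : Set (G → Bool) :=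
  closure { y : G → Bool | ∃ g : G, y = fun h => x (h * g) }

/-- `Per(x, Γ, α)`, the set of `Γ`-periodic positions of `x` with value `α`. -/
def perA {G : Type*} [Group G] (x : G → Bool) (Γ : Subgroup G) (α : Bool) : Set G :=
  { g : G | ∀ γ ∈ Γ, x (g * γ) = α }

/-- `Per(x, Γ) = Per(x,Γ,0) ∪ Per(x,Γ,1)`. -/
def perSet {G : Type*} [Group G] (x : G → Bool) (Γ : Subgroup G) : Set G :=
  perA x Γ false ∪ perA x Γ true

/-- `E` is a fundamental domain of `G/Γ`: `g ↦ gΓ` is a bijection from `E` onto `G/Γ`. -/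
def IsFundDom {G : Type*} [Group G] (Γ : Subgroup G) (E : Finset G) : Prop :=
  ∀ g : G, ∃! d, d ∈ E ∧ g⁻¹ * d ∈ Γ

/-- The density `D(x,Γ)` of `Per(x,Γ)` computed in a fundamental domain `E`. -/
noncomputable def perDensity {G : Type*} [Group G] (x : G → Bool) (Γ : Subgroup G)
    (E : Finset G) : ℝ :=
  (((E : Set G) ∩ perSet x Γ).ncard : ℝ) / (E.card : ℝ)

/-- The regularity constant `𝒟(x)`. -/
noncomputable def regConst {G : Type*} [Group G] (x : G → Bool) : ℝ :=
  sSup { r : ℝ | ∃ (Γ : Subgroup G) (E : Finset G),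
    Γ.FiniteIndex ∧ IsFundDom Γ E ∧ r = perDensity x Γ E }

/-- If `W` is generic (`∂W ∩ τ(G) = ∅`) and the images `τ(Γ_n)` of a decreasing
sequence of finite-index normal subgroups get inside every neighborhood of `1_H`, then the
symbolic model set `x_W` is a Toeplitz array relative to `(Γ_n)`. -/
theorem stmt_4 {G : Type*} [Group G] [Countable G] [Infinite G]
    {H : Type*} [Group H] [TopologicalSpace H] [IsTopologicalGroup H]
    [CompactSpace H] [TopologicalSpace.MetrizableSpace H]
    (τ : G →* H) (hinj : Function.Injective ⇑τ) (hdense : DenseRange ⇑τ)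
    (Γ : ℕ → Subgroup G) (hdec : ∀ n, Γ (n + 1) ≤ Γ n)
    (hnorm : ∀ n, (Γ n).Normal) (hfi : ∀ n, (Γ n).FiniteIndex)
    (hbasis : ∀ U ∈ nhds (1 : H), ∃ n, ∀ γ ∈ Γ n, τ γ ∈ U)
    (W : Set H) (hgen : frontier W ∩ Set.range ⇑τ = ∅) :
    ∀ g : G, ∃ n : ℕ, ∃ α : Bool, ∀ γ ∈ Γ n, modelSet (⇑τ) W (g * γ) = α := by
  intro g
  have hg : τ g ∉ frontier W := by
    intro h
    have : τ g ∈ frontier W ∩ Set.range ⇑τ := ⟨h, ⟨g, rfl⟩⟩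
    rw [hgen] at this
    exact this
  by_cases hW : τ g ∈ W
  · have hint : τ g ∈ interior W := by
      rw [← self_diff_frontier]; exact ⟨hW, hg⟩
    have hU : {h : H | τ g * h ∈ interior W} ∈ nhds (1 : H) := by
      have hcont : Continuous fun h : H => τ g * h := continuous_const.mul continuous_id
      exact (IsOpen.preimage hcont isOpen_interior).mem_nhds (by simpa using hint)
    obtain ⟨n, hn⟩ := hbasis _ hU
    refine ⟨n, true, fun γ hγ => ?_⟩
    have : τ (g * γ) ∈ W := by
      have := hn γ hγ
      simp only [Set.mem_setOf_eq] at this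
      rw [map_mul]
      exact interior_subset this
    simp only [modelSet, decide_eq_true_eq]
    exact this
  · have hint : τ g ∈ interior Wᶜ := by
      rw [← self_diff_frontier, frontier_compl]
      exact ⟨hW, hg⟩
    have hU : {h : H | τ g * h ∈ interior Wᶜ} ∈ nhds (1 : H) := by
      have hcont : Continuous fun h : H => τ g * h := continuous_const.mul continuous_id
      exact (IsOpen.preimage hcont isOpen_interior).mem_nhds (by simpa using hint)
    obtain ⟨n, hn⟩ := hbasis _ hU
    refine ⟨n, false, fun γ hγ => ?_⟩
    have : τ (g * γ) ∉ W := by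
      have := hn γ hγ
      simp only [Set.mem_setOf_eq] at this
      rw [map_mul]
      exact interior_subset this
    simp only [modelSet, decide_eq_false_iff_not]
    exact this
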